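/- Let $A$ be a nonempty set and realize $FVL(A) \subseteq \mathbb{R}^{\mathbb{R}^A}$. If a positive linear functional $\phi$ on $FVL(A)$ satisfies $\phi(|\delta_a|) = 0$ for every $a \in A$, then $\phi = 0$. -/
import Mathlib


def IsVectorSublattice {E : Type*} [AddCommGroup E] [Lattice E] [Module ℝ E]
    (S : Set E) : Prop :=
  (0 : E) ∈ S ∧ (∀ x ∈ S, ∀ y ∈ S, x + y ∈ S) ∧ (∀ (c : ℝ), ∀ x ∈ S, c • x ∈ S) ∧
    (∀ x ∈ S, ∀ y ∈ S, x ⊔ y ∈ S) ∧ (∀ x ∈ S, ∀ y ∈ S, x ⊓ y ∈ S)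

def latticeGen {E : Type*} [AddCommGroup E] [Lattice E] [Module ℝ E]
    (D : Set E) : Set E :=
  ⋂₀ {S : Set E | IsVectorSublattice S ∧ D ⊆ S}

/-- realizing `FVL(A)` as the sublattice `L` of `ℝ^(ℝ^A)` generated by
the evaluations `δ_a`, any positive linear functional `φ` on `L` vanishing on every
`|δ_a|` vanishes identically. -/
theorem stmt_11 {A : Type*} [Nonempty A]
    (L : Set ((A → ℝ) → ℝ))
    (hL : L = latticeGen (Set.range (fun (a : A) => fun ξ : A → ℝ => ξ a)))
    (φ : ((A → ℝ) → ℝ) → ℝ)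
    (hadd : ∀ f ∈ L, ∀ g ∈ L, φ (f + g) = φ f + φ g)
    (hsmul : ∀ (c : ℝ), ∀ f ∈ L, φ (c • f) = c * φ f)
    (hpos : ∀ f ∈ L, 0 ≤ f → 0 ≤ φ f)
    (hδ : ∀ a : A, φ (fun ξ : A → ℝ => |ξ a|) = 0) :
    ∀ f ∈ L, φ f = 0 := by
  classical
  obtain ⟨h0L, haddL, hsmulL, hsupL, hinfL⟩ : IsVectorSublattice L := by
    rw [hL]
    exact ⟨Set.mem_sInter.2 fun S hS => hS.1.1,
      fun x hx y hy => Set.mem_sInter.2 fun S hS =>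
        hS.1.2.1 x (Set.mem_sInter.1 hx S hS) y (Set.mem_sInter.1 hy S hS),
      fun c x hx => Set.mem_sInter.2 fun S hS => hS.1.2.2.1 c x (Set.mem_sInter.1 hx S hS),
      fun x hx y hy => Set.mem_sInter.2 fun S hS =>
        hS.1.2.2.2.1 x (Set.mem_sInter.1 hx S hS) y (Set.mem_sInter.1 hy S hS),
      fun x hx y hy => Set.mem_sInter.2 fun S hS =>
        hS.1.2.2.2.2 x (Set.mem_sInter.1 hx S hS) y (Set.mem_sInter.1 hy S hS)⟩
  have hδL : ∀ a : A, (fun ξ : A → ℝ => ξ a) ∈ L := by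
    intro a; rw [hL]; exact Set.mem_sInter.2 fun S hS => hS.2 ⟨a, rfl⟩
  have hφ0 : φ 0 = 0 := by
    have h := hsmul 0 0 h0L; simpa using h
  have habsL : ∀ a : A, (fun ξ : A → ℝ => |ξ a|) ∈ L := by
    intro a
    have h3 := hsupL _ (hδL a) _ (hsmulL (-1) _ (hδL a))
    have heq : (fun ξ : A → ℝ => |ξ a|) =
        ((fun ξ : A → ℝ => ξ a) ⊔ ((-1 : ℝ) • fun ξ : A → ℝ => ξ a)) := by
      funext ξ
      simp [Pi.sup_apply, abs_eq_max_neg]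
    rw [heq]; exact h3
  -- the basic dominating functions
  have key : ∀ s : Finset A,
      (fun ξ : A → ℝ => ∑ a ∈ s, |ξ a|) ∈ L ∧ φ (fun ξ : A → ℝ => ∑ a ∈ s, |ξ a|) = 0 := by
    intro s
    induction s using Finset.induction_on with
    | empty =>
      have heq : (fun ξ : A → ℝ => ∑ a ∈ (∅ : Finset A), |ξ a|) = 0 := by
        funext ξ; simp
      rw [heq]; exact ⟨h0L, hφ0⟩
    | @insert a s ha ih =>
      have heq : (fun ξ : A → ℝ => ∑ b ∈ insert a s, |ξ b|) =
          (fun ξ : A → ℝ => |ξ a|) + (fun ξ : A → ℝ => ∑ b ∈ s, |ξ b|) := by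
        funext ξ; simp [Finset.sum_insert ha]
      rw [heq]
      refine ⟨haddL _ (habsL a) _ ih.1, ?_⟩
      rw [hadd _ (habsL a) _ ih.1, hδ a, ih.2]; ring
  -- a combination bound
  have hbound : ∀ (x y : ℝ) (s₁ s₂ : Finset A) (c₁ c₂ : ℝ) (ξ : A → ℝ),
      |x| ≤ c₁ * ∑ a ∈ s₁, |ξ a| → |y| ≤ c₂ * ∑ a ∈ s₂, |ξ a| →
      |x| + |y| ≤ (|c₁| + |c₂|) * ∑ a ∈ s₁ ∪ s₂, |ξ a| := by
    intro x y s₁ s₂ c₁ c₂ ξ h1 h2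
    have hA1 : (0:ℝ) ≤ ∑ a ∈ s₁, |ξ a| := Finset.sum_nonneg fun i _ => abs_nonneg _
    have hA2 : (0:ℝ) ≤ ∑ a ∈ s₂, |ξ a| := Finset.sum_nonneg fun i _ => abs_nonneg _
    have hT1 : ∑ a ∈ s₁, |ξ a| ≤ ∑ a ∈ s₁ ∪ s₂, |ξ a| :=
      Finset.sum_le_sum_of_subset_of_nonneg Finset.subset_union_left
        (fun i _ _ => abs_nonneg _)
    have hT2 : ∑ a ∈ s₂, |ξ a| ≤ ∑ a ∈ s₁ ∪ s₂, |ξ a| :=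
      Finset.sum_le_sum_of_subset_of_nonneg Finset.subset_union_right
        (fun i _ _ => abs_nonneg _)
    have hb1 : |x| ≤ |c₁| * ∑ a ∈ s₁ ∪ s₂, |ξ a| :=
      h1.trans ((mul_le_mul_of_nonneg_right (le_abs_self c₁) hA1).trans
        (mul_le_mul_of_nonneg_left hT1 (abs_nonneg c₁)))
    have hb2 : |y| ≤ |c₂| * ∑ a ∈ s₁ ∪ s₂, |ξ a| :=
      h2.trans ((mul_le_mul_of_nonneg_right (le_abs_self c₂) hA2).trans
        (mul_le_mul_of_nonneg_left hT2 (abs_nonneg c₂)))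
    rw [add_mul]; linarith
  have habs_max : ∀ x y : ℝ, |x ⊔ y| ≤ |x| + |y| := by
    intro x y
    rcases le_total x y with h | h
    · rw [sup_eq_right.2 h]; linarith [abs_nonneg x]
    · rw [sup_eq_left.2 h]; linarith [abs_nonneg y]
  have habs_min : ∀ x y : ℝ, |x ⊓ y| ≤ |x| + |y| := by
    intro x y
    rcases le_total x y with h | h
    · rw [inf_eq_left.2 h]; linarith [abs_nonneg y]
    · rw [inf_eq_right.2 h]; linarith [abs_nonneg x]
  -- the set of dominated elements of L is a vector sublattice containing the δ's
  set S : Set ((A → ℝ) → ℝ) :=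
    {f | f ∈ L ∧ ∃ s : Finset A, ∃ c : ℝ, ∀ ξ, |f ξ| ≤ c * ∑ a ∈ s, |ξ a|} with hSdef
  have hSlat : IsVectorSublattice S := by
    refine ⟨⟨h0L, ∅, 0, fun ξ => by simp⟩, ?_, ?_, ?_, ?_⟩
    · rintro f ⟨hfL, s₁, c₁, hf⟩ g ⟨hgL, s₂, c₂, hg⟩
      refine ⟨haddL _ hfL _ hgL, s₁ ∪ s₂, |c₁| + |c₂|, fun ξ => ?_⟩
      calc |(f + g) ξ| = |f ξ + g ξ| := rfl
        _ ≤ |f ξ| + |g ξ| := abs_add_le _ _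
        _ ≤ _ := hbound _ _ _ _ _ _ ξ (hf ξ) (hg ξ)
    · rintro c f ⟨hfL, s, c₁, hf⟩
      refine ⟨hsmulL c f hfL, s, |c| * c₁, fun ξ => ?_⟩
      have : |(c • f) ξ| = |c| * |f ξ| := by
        simp [Pi.smul_apply, abs_mul]
      rw [this, mul_assoc]
      exact mul_le_mul_of_nonneg_left (hf ξ) (abs_nonneg c)
    · rintro f ⟨hfL, s₁, c₁, hf⟩ g ⟨hgL, s₂, c₂, hg⟩
      refine ⟨hsupL _ hfL _ hgL, s₁ ∪ s₂, |c₁| + |c₂|, fun ξ => ?_⟩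
      calc |(f ⊔ g) ξ| = |f ξ ⊔ g ξ| := rfl
        _ ≤ |f ξ| + |g ξ| := habs_max _ _
        _ ≤ _ := hbound _ _ _ _ _ _ ξ (hf ξ) (hg ξ)
    · rintro f ⟨hfL, s₁, c₁, hf⟩ g ⟨hgL, s₂, c₂, hg⟩
      refine ⟨hinfL _ hfL _ hgL, s₁ ∪ s₂, |c₁| + |c₂|, fun ξ => ?_⟩
      calc |(f ⊓ g) ξ| = |f ξ ⊓ g ξ| := rfl
        _ ≤ |f ξ| + |g ξ| := habs_min _ _
        _ ≤ _ := hbound _ _ _ _ _ _ ξ (hf ξ) (hg ξ)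
  have hDS : Set.range (fun (a : A) => fun ξ : A → ℝ => ξ a) ⊆ S := by
    rintro f ⟨a, rfl⟩
    exact ⟨hδL a, {a}, 1, fun ξ => by simp⟩
  have hLS : L ⊆ S := by
    rw [hL]; exact Set.sInter_subset_of_mem ⟨hSlat, hDS⟩
  -- conclude
  intro f hf
  obtain ⟨-, s, c, hfb⟩ := hLS hf
  set g : (A → ℝ) → ℝ := c • fun ξ : A → ℝ => ∑ a ∈ s, |ξ a| with hgdef
  have hgL : g ∈ L := hsmulL c _ (key s).1
  have hφg : φ g = 0 := by
    rw [hgdef, hsmul c _ (key s).1, (key s).2, mul_zero]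
  have hfg : ∀ ξ, |f ξ| ≤ g ξ := by
    intro ξ
    simpa [hgdef] using hfb ξ
  have hneg : (-1 : ℝ) • f ∈ L := hsmulL _ _ hf
  have h1 : 0 ≤ φ (g + (-1 : ℝ) • f) := by
    apply hpos _ (haddL _ hgL _ hneg)
    intro ξ
    have := hfg ξ
    have h := abs_le.1 this
    simp only [Pi.add_apply, Pi.smul_apply, smul_eq_mul, Pi.zero_apply]
    linarith [h.2]
  have h2 : 0 ≤ φ (g + f) := by
    apply hpos _ (haddL _ hgL _ hf)
    intro ξ
    have h := abs_le.1 (hfg ξ)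
    simp only [Pi.add_apply, Pi.zero_apply]
    linarith [h.1]
  rw [hadd _ hgL _ hneg, hsmul _ _ hf, hφg] at h1
  rw [hadd _ hgL _ hf, hφg] at h2
  linarith
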